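/- Let B be a finite-dimensional complex Banach space with B ≠ {0}. Then no C₀-semigroup (T t)_{t≥0} on B is hypercyclic: for every f ∈ B the orbit {T t f : t ≥ 0} is not dense in B. -/

import Mathlib

open Module

lemma exists_common_eigenvector_aux :
    ∀ (n : ℕ) {ι V : Type*} [AddCommGroup V] [Module ℂ V] [FiniteDimensional ℂ V],
    Nontrivial V → Module.finrank ℂ V = n → ∀ f : ι → Module.End ℂ V,
    (∀ i j, Commute (f i) (f j)) →
    ∃ (v : V) (χ : ι → ℂ), v ≠ 0 ∧ ∀ i, f i v = χ i • v := by
  intro n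
  induction n using Nat.strong_induction_on with
  | _ n ih =>
    intro ι V _ _ _ hnt hrank f hcomm
    by_cases h : ∃ i μ, Module.End.eigenspace (f i) μ ≠ ⊥ ∧ Module.End.eigenspace (f i) μ ≠ ⊤
    · obtain ⟨i, μ, hbot, htop⟩ := h
      set E := Module.End.eigenspace (f i) μ with hE
      have hmaps : ∀ j, Set.MapsTo (f j) E E := by
        intro j x hx
        have hx' : f i x = μ • x := Module.End.mem_eigenspace_iff.mp hx
        show f j x ∈ E
        rw [hE, Module.End.mem_eigenspace_iff]
        have := LinearMap.congr_fun (hcomm i j) x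
        simp only [Module.End.mul_apply] at this
        rw [this, hx', map_smul]
      have hlt : Module.finrank ℂ E < n := hrank ▸ Submodule.finrank_lt htop
      have hEnt : Nontrivial E := Submodule.nontrivial_iff_ne_bot.mpr hbot
      obtain ⟨v, χ, hv0, hv⟩ := ih _ hlt hEnt rfl
        (fun j => (f j).restrict (hmaps j))
        (fun j k => by
          ext x
          have := LinearMap.congr_fun (hcomm j k) (x : V)
          exact this)
      refine ⟨(v : V), χ, by simpa using hv0, fun j => ?_⟩
      have := congrArg (Subtype.val) (hv j)
      exact this
    · push_neg at h
      have hsc : ∀ i, ∃ μ : ℂ, ∀ x : V, f i x = μ • x := by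
        intro i
        obtain ⟨μ, hμ⟩ := Module.End.exists_eigenvalue (f i)
        have hbot : Module.End.eigenspace (f i) μ ≠ ⊥ := hμ
        refine ⟨μ, fun x => ?_⟩
        have htop := h i μ hbot
        have : x ∈ Module.End.eigenspace (f i) μ := htop ▸ Submodule.mem_top
        rwa [Module.End.mem_eigenspace_iff] at this
      choose μ hμ using hsc
      obtain ⟨v, hv⟩ := exists_ne (0 : V)
      exact ⟨v, μ, hv, fun i => hμ i v⟩

/-- No C₀-semigroup on a nonzero finite-dimensional complex Banach space is
hypercyclic: no orbit is dense. -/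
theorem no_hypercyclic_semigroup_finiteDimensional
    {B : Type*} [NormedAddCommGroup B] [NormedSpace ℂ B]
    [FiniteDimensional ℂ B] [Nontrivial B]
    (T : ℝ → B →L[ℂ] B)
    (hT0 : T 0 = 1)
    (hTadd : ∀ s t : ℝ, 0 ≤ s → 0 ≤ t → T (s + t) = (T s).comp (T t))
    (hTcont : ∀ g : B, ContinuousOn (fun t => T t g) (Set.Ici (0 : ℝ))) :
    ∀ f : B, ¬ Dense ((fun t => T t f) '' Set.Ici (0 : ℝ)) := by
  intro f hD
  classical
  -- the commuting family of dual maps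
  let g : {t : ℝ // 0 ≤ t} → Module.End ℂ (Module.Dual ℂ B) :=
    fun t => LinearMap.dualMap ((T t.1 : B →ₗ[ℂ] B))
  have hTT : ∀ (s t : ℝ), 0 ≤ s → 0 ≤ t → ∀ x : B, T s (T t x) = T t (T s x) := by
    intro s t hs ht x
    have h1 := hTadd s t hs ht
    have h2 := hTadd t s ht hs
    calc T s (T t x) = T (s + t) x := by rw [h1]; rfl
    _ = T (t + s) x := by rw [add_comm]
    _ = T t (T s x) := by rw [h2]; rfl
  have hgcomm : ∀ s t, Commute (g s) (g t) := by
    intro s t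
    show g s * g t = g t * g s
    ext φ x
    simp only [Module.End.mul_apply, g, LinearMap.dualMap_apply, ContinuousLinearMap.coe_coe]
    exact congrArg φ (hTT t.1 s.1 t.2 s.2 x)
  have hdnt : Nontrivial (Module.Dual ℂ B) := by
    have h1 : 0 < Module.finrank ℂ (Module.Dual ℂ B) := by
      rw [Subspace.dual_finrank_eq]
      exact Module.finrank_pos
    exact Module.nontrivial_of_finrank_pos h1
  obtain ⟨φ, χ, hφ0, hφ⟩ :=
    exists_common_eigenvector_aux (Module.finrank ℂ (Module.Dual ℂ B)) hdnt rfl g hgcomm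
  have key : ∀ (t : ℝ) (ht : 0 ≤ t) (x : B), φ (T t x) = χ ⟨t, ht⟩ * φ x := by
    intro t ht x
    have := LinearMap.congr_fun (hφ ⟨t, ht⟩) x
    simpa [g, LinearMap.dualMap_apply, smul_eq_mul] using this
  have φcont : Continuous φ := LinearMap.continuous_of_finiteDimensional φ
  obtain ⟨x₀, hx₀⟩ : ∃ x, φ x ≠ 0 := by
    by_contra h
    push_neg at h
    exact hφ0 (LinearMap.ext fun x => h x)
  set lam : ℝ → ℂ := fun t => φ (T t x₀) / φ x₀ with hlam
  have hlam_eig : ∀ t : ℝ, 0 ≤ t → ∀ x : B, φ (T t x) = lam t * φ x := by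
    intro t ht x
    have h1 := key t ht x
    have h2 := key t ht x₀
    rw [h1]
    congr 1
    rw [hlam]
    simp only
    rw [h2, mul_div_assoc, div_self hx₀, mul_one]
  have lam0 : lam 0 = 1 := by
    simp only [hlam, hT0, ContinuousLinearMap.one_apply]
    exact div_self hx₀
  have hmul : ∀ s t : ℝ, 0 ≤ s → 0 ≤ t → lam (s + t) = lam s * lam t := by
    intro s t hs ht
    have h1 : φ (T (s + t) x₀) = lam (s + t) * φ x₀ := hlam_eig (s + t) (by linarith) x₀
    have h2 : φ (T (s + t) x₀) = lam s * (lam t * φ x₀) := by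
      rw [hTadd s t hs ht, ContinuousLinearMap.comp_apply, hlam_eig s hs, hlam_eig t ht]
    have h3 : lam (s + t) * φ x₀ = (lam s * lam t) * φ x₀ := by
      rw [← h1, h2]; ring
    exact mul_right_cancel₀ hx₀ h3
  have hpow : ∀ (n : ℕ) (r : ℝ), 0 ≤ r → lam ((n : ℝ) + r) = lam 1 ^ n * lam r := by
    intro n
    induction n with
    | zero => intro r hr; simp
    | succ n ihn =>
      intro r hr
      have harith : ((n + 1 : ℕ) : ℝ) + r = 1 + ((n : ℝ) + r) := by push_cast; ring
      rw [harith, hmul 1 ((n : ℝ) + r) zero_le_one (by positivity), ihn r hr, pow_succ]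
      ring
  have hcont : ContinuousOn lam (Set.Ici (0 : ℝ)) :=
    (φcont.comp_continuousOn (hTcont x₀)).div_const _
  -- the scalar orbit is dense
  set c : ℂ := φ f with hc
  set S : Set ℂ := (fun t => lam t * c) '' Set.Ici 0 with hS
  have hDS : Dense S := by
    have himg : Dense (⇑φ '' ((fun t => T t f) '' Set.Ici 0)) := by
      intro z
      have hz : ((z / φ x₀) • x₀) ∈ closure ((fun t => T t f) '' Set.Ici 0) := hD _
      have hsub := image_closure_subset_closure_image (f := ⇑φ) φcont
        (s := (fun t => T t f) '' Set.Ici 0)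
      have hzz : φ ((z / φ x₀) • x₀) = z := by
        rw [map_smul, smul_eq_mul, div_mul_cancel₀ _ hx₀]
      exact hzz ▸ hsub ⟨_, hz, rfl⟩
    rw [Set.image_image] at himg
    have : S = (fun t => φ (T t f)) '' Set.Ici 0 := by
      apply Set.image_congr
      intro t ht
      exact (hlam_eig t ht f).symm
    rwa [this]
  by_cases hc0 : c = 0
  · have hsub : S ⊆ {0} := by
      rintro z ⟨t, _, rfl⟩
      simp [hc0]
    have h1 : (1 : ℂ) ∈ closure S := hDS 1
    have h2 : closure S ⊆ closure {(0 : ℂ)} := closure_mono hsub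
    rw [closure_singleton] at h2
    exact one_ne_zero (h2 h1)
  · obtain ⟨M, hM⟩ := (isCompact_Icc (a := (0:ℝ)) (b := 1)).exists_bound_of_continuousOn
      (hcont.mono (Set.Icc_subset_Ici_self))
    have hM1 : 1 ≤ M := by
      have := hM 0 ⟨le_refl 0, zero_le_one⟩
      rwa [lam0, norm_one] at this
    have hdecomp : ∀ t : ℝ, 0 ≤ t →
        ∃ (n : ℕ) (r : ℝ), 0 ≤ r ∧ r ≤ 1 ∧ lam t = lam 1 ^ n * lam r := by
      intro t ht
      refine ⟨⌊t⌋₊, t - ⌊t⌋₊, by simpa using Nat.floor_le ht,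
        le_of_lt (by have := Nat.lt_floor_add_one t; linarith), ?_⟩
      rw [← hpow ⌊t⌋₊ (t - ⌊t⌋₊) (by simpa using Nat.floor_le ht)]
      congr 1
      ring
    by_cases hcase : ‖lam 1‖ ≤ 1
    · -- bounded case
      have hbd : ∀ z ∈ S, ‖z‖ ≤ M * ‖c‖ := by
        rintro z ⟨t, ht, rfl⟩
        obtain ⟨n, r, hr0, hr1, heq⟩ := hdecomp t ht
        have : ‖lam t‖ ≤ M := by
          rw [heq, norm_mul, norm_pow]
          calc ‖lam 1‖ ^ n * ‖lam r‖ ≤ 1 * M := by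
                apply mul_le_mul (pow_le_one₀ (norm_nonneg _) hcase) (hM r ⟨hr0, hr1⟩)
                  (norm_nonneg _) zero_le_one
          _ = M := one_mul M
        calc ‖lam t * c‖ = ‖lam t‖ * ‖c‖ := norm_mul _ _
        _ ≤ M * ‖c‖ := mul_le_mul_of_nonneg_right this (norm_nonneg _)
      obtain ⟨y, hyb, hyS⟩ := Metric.dense_iff.mp hDS ((M * ‖c‖ + 1 : ℝ) : ℂ) 1 zero_lt_one
      have hy : dist ((M * ‖c‖ + 1 : ℝ) : ℂ) y < 1 := by
        rw [dist_comm]; exact Metric.mem_ball.mp hyb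
      have h1 : ‖((M * ‖c‖ + 1 : ℝ) : ℂ)‖ = M * ‖c‖ + 1 := by
        rw [Complex.norm_real, Real.norm_eq_abs, abs_of_nonneg (by positivity)]
      have h2 : ‖((M * ‖c‖ + 1 : ℝ) : ℂ)‖ ≤ ‖y‖ + dist ((M * ‖c‖ + 1 : ℝ) : ℂ) y := by
        rw [dist_eq_norm]
        have := norm_sub_norm_le (((M * ‖c‖ + 1 : ℝ) : ℂ)) y
        linarith
      have h3 := hbd y hyS
      rw [h1] at h2
      linarith
    · push_neg at hcase
      have hlam1 : lam 1 ≠ 0 := by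
        intro h
        rw [h, norm_zero] at hcase
        linarith
      have hne : ∀ r ∈ Set.Icc (0:ℝ) 1, lam r ≠ 0 := by
        rintro r ⟨hr0, hr1⟩ hzero
        apply hlam1
        have : (1 : ℝ) = r + (1 - r) := by ring
        rw [this, hmul r (1 - r) hr0 (by linarith), hzero, zero_mul]
      obtain ⟨r₀, hr₀mem, hmin⟩ := isCompact_Icc.exists_isMinOn
        ⟨0, le_refl 0, zero_le_one⟩ ((hcont.mono Set.Icc_subset_Ici_self).norm)
      set m : ℝ := ‖lam r₀‖ with hm
      have hmpos : 0 < m := norm_pos_iff.mpr (hne r₀ hr₀mem)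
      have hlb : ∀ z ∈ S, m * ‖c‖ ≤ ‖z‖ := by
        rintro z ⟨t, ht, rfl⟩
        obtain ⟨n, r, hr0, hr1, heq⟩ := hdecomp t ht
        have hle : m ≤ ‖lam t‖ := by
          rw [heq, norm_mul, norm_pow]
          have h1 : m ≤ ‖lam r‖ := hmin ⟨hr0, hr1⟩
          have h2 : (1:ℝ) ≤ ‖lam 1‖ ^ n := one_le_pow₀ (le_of_lt hcase)
          calc m ≤ ‖lam r‖ := h1
          _ = 1 * ‖lam r‖ := (one_mul _).symm
          _ ≤ ‖lam 1‖ ^ n * ‖lam r‖ :=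
              mul_le_mul_of_nonneg_right h2 (norm_nonneg _)
        rw [norm_mul]
        exact mul_le_mul_of_nonneg_right hle (norm_nonneg _)
      obtain ⟨y, hyb, hyS⟩ := Metric.dense_iff.mp hDS 0 (m * ‖c‖)
        (mul_pos hmpos (norm_pos_iff.mpr hc0))
      have hy : ‖y‖ < m * ‖c‖ := by
        rw [← dist_zero_right]
        exact Metric.mem_ball.mp hyb
      have := hlb y hyS
      linarith
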